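/- Minkowski summation of UL-flexibility sets is exactly additive in parameters: for valid UL-parameter pairs (u₁,l₁) and (u₂,l₂), F(u₁,l₁) ⊕ F(u₂,l₂) = F(u₁+u₂, l₁+l₂), where ⊕ denotes the Minkowski sum {p₁ + p₂ : p₁ ∈ F(u₁,l₁), p₂ ∈ F(u₂,l₂)}. -/

import Mathlib

open Finset

noncomputable section

/-- The UL-flexibility set: all signals `p` such that for every nonempty
subset `S` of time indices with `|S| = k`, `l k ≤ Δt * ∑_{t∈S} p t ≤ u k`. -/
def ULset (T : ℕ) (Δt : ℝ) (u l : ℕ → ℝ) : Set (Fin T → ℝ) :=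
  {p | ∀ S : Finset (Fin T), S.Nonempty →
    l S.card ≤ Δt * ∑ t ∈ S, p t ∧ Δt * ∑ t ∈ S, p t ≤ u S.card}

/-- Zero extension of a parameter vector: value 0 at index 0. -/
def ZExt (v : ℕ → ℝ) : ℕ → ℝ := fun k => if k = 0 then 0 else v k

/-- Valid UL parameters: the zero-extension of `u` is concave, nonnegative and
increasing; the zero-extension of `l` is convex, nonnegative and increasing; and
the zero-extension of `u` plus the reversed zero-extension of `l` is increasing. -/
def ValidUL (T : ℕ) (u l : ℕ → ℝ) : Prop :=
  (∀ j, 1 ≤ j → j + 1 ≤ T → ZExt u (j - 1) + ZExt u (j + 1) ≤ 2 * ZExt u j) ∧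
  (∀ k, k ≤ T → 0 ≤ ZExt u k) ∧
  (∀ j, j + 1 ≤ T → ZExt u j ≤ ZExt u (j + 1)) ∧
  (∀ j, 1 ≤ j → j + 1 ≤ T → 2 * ZExt l j ≤ ZExt l (j - 1) + ZExt l (j + 1)) ∧
  (∀ k, k ≤ T → 0 ≤ ZExt l k) ∧
  (∀ j, j + 1 ≤ T → ZExt l j ≤ ZExt l (j + 1)) ∧
  (∀ j, 1 ≤ j → j ≤ T →
    ZExt l (T - j + 1) - ZExt l (T - j) ≤ ZExt u j - ZExt u (j - 1))

/-- Vertex candidate `p^(k)` (0-based time index `t` corresponds to paper index `t+1`). -/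
def ULvertex (T : ℕ) (Δt : ℝ) (u l : ℕ → ℝ) (k : ℕ) : Fin T → ℝ :=
  fun t => if (t : ℕ) < k then (ZExt u ((t : ℕ) + 1) - ZExt u (t : ℕ)) / Δt
           else (ZExt l (T - (t : ℕ)) - ZExt l (T - (t : ℕ) - 1)) / Δt

namespace ULaux

def ext (T : ℕ) (x : Fin T → ℝ) : ℕ → ℝ := fun i => if h : i < T then x ⟨i, h⟩ else 0

def pfx (T : ℕ) (x : Fin T → ℝ) (j : ℕ) : ℝ := ∑ i ∈ range j, ext T x i

def Iset (T j : ℕ) : Finset (Fin T) := univ.filter (fun t => (t : ℕ) < j)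

def Jset (T m : ℕ) : Finset (Fin T) := univ.filter (fun t => T - m ≤ (t : ℕ))

lemma ext_val (T : ℕ) (x : Fin T → ℝ) (t : Fin T) : ext T x (t : ℕ) = x t := by
  simp [ext, t.isLt]

lemma pfx_eq_sum (T : ℕ) (x : Fin T → ℝ) {j : ℕ} (hj : j ≤ T) :
    pfx T x j = ∑ t ∈ Iset T j, x t := by
  have himg : (Iset T j).image Fin.val = range j := by
    ext i
    simp only [Iset, mem_image, mem_filter, mem_univ, true_and, mem_range]
    constructor
    · rintro ⟨t, ht, rfl⟩; exact ht
    · intro hi; exact ⟨⟨i, lt_of_lt_of_le hi hj⟩, hi, rfl⟩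
  unfold pfx
  rw [← himg, Finset.sum_image (by intro a _ b _ h; exact Fin.val_injective h)]
  exact Finset.sum_congr rfl (fun t _ => ext_val T x t)

lemma card_Iset (T : ℕ) {j : ℕ} (hj : j ≤ T) : (Iset T j).card = j := by
  have : Iset T j = (range j).attachFin (fun i hi => lt_of_lt_of_le (mem_range.mp hi) hj) := by
    ext t; simp [Iset, Finset.mem_attachFin]
  rw [this, Finset.card_attachFin, Finset.card_range]

lemma Jset_eq_compl (T m : ℕ) : Jset T m = (Iset T (T - m))ᶜ := by
  ext t; simp [Jset, Iset, not_lt]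

lemma card_Jset (T : ℕ) {m : ℕ} (hm : m ≤ T) : (Jset T m).card = m := by
  rw [Jset_eq_compl, Finset.card_compl, card_Iset T (Nat.sub_le T m), Fintype.card_fin]
  omega

lemma sum_Jset (T : ℕ) (x : Fin T → ℝ) (m : ℕ) :
    ∑ t ∈ Jset T m, x t = pfx T x T - pfx T x (T - m) := by
  rw [Jset_eq_compl, pfx_eq_sum T x (le_refl T), pfx_eq_sum T x (Nat.sub_le T m)]
  have h1 : Iset T T = univ := by ext t; simp [Iset, t.isLt]
  rw [h1, ← Finset.sum_compl_add_sum (Iset T (T - m)) x]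
  ring
lemma strictMono_nat_le {k : ℕ} (f : Fin k → ℕ) (hf : StrictMono f) :
    ∀ n (h : n < k), n ≤ f ⟨n, h⟩ := by
  intro n
  induction n with
  | zero => intro h; exact Nat.zero_le _
  | succ n ih =>
    intro h
    have h' : n < k := Nat.lt_of_succ_lt h
    have h1 := hf (show (⟨n, h'⟩ : Fin k) < ⟨n+1, h⟩ by simp [Fin.lt_def])
    have h2 := ih h'
    omega

lemma sum_le_prefix {T : ℕ} (q : Fin T → ℝ) (hq : ∀ i j : Fin T, i ≤ j → q j ≤ q i)
    (S : Finset (Fin T)) : ∑ t ∈ S, q t ≤ ∑ t ∈ Iset T S.card, q t := by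
  set k := S.card with hk
  have hkT : k ≤ T := by
    simpa using Finset.card_le_card (Finset.subset_univ S)
  have hsum : ∑ t ∈ S, q t = ∑ i : Fin k, q (S.orderEmbOfFin hk.symm i) := by
    rw [← Finset.sum_attach S q]
    exact (Fintype.sum_bijective (S.orderIsoOfFin hk.symm)
      (S.orderIsoOfFin hk.symm).bijective _ _ (fun i => rfl)).symm
  have hsum2 : ∑ t ∈ Iset T k, q t = ∑ i : Fin k, q ⟨(i : ℕ), lt_of_lt_of_le i.isLt hkT⟩ := by
    rw [← pfx_eq_sum T q hkT]
    unfold pfx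
    rw [← Fin.sum_univ_eq_sum_range (fun i => ext T q i) k]
    refine Finset.sum_congr rfl (fun i _ => ?_)
    simp [ext, lt_of_lt_of_le i.isLt hkT]
  rw [hsum, hsum2]
  refine Finset.sum_le_sum (fun i _ => ?_)
  refine hq _ _ ?_
  have : (i : ℕ) ≤ ((S.orderEmbOfFin hk.symm i : Fin T) : ℕ) := by
    refine strictMono_nat_le (fun j => ((S.orderEmbOfFin hk.symm j : Fin T) : ℕ)) ?_ i i.isLt
    intro a b hab
    exact Fin.lt_def.mp ((S.orderEmbOfFin hk.symm).strictMono hab)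
  simpa [Fin.le_def] using this

lemma suffix_le_sum {T : ℕ} (q : Fin T → ℝ) (hq : ∀ i j : Fin T, i ≤ j → q j ≤ q i)
    (S : Finset (Fin T)) : ∑ t ∈ Jset T S.card, q t ≤ ∑ t ∈ S, q t := by
  set k := S.card with hk
  have hkT : k ≤ T := by simpa using Finset.card_le_card (Finset.subset_univ S)
  set q' : Fin T → ℝ := fun t => -q t.rev with hq'def
  have hq' : ∀ i j : Fin T, i ≤ j → q' j ≤ q' i := by
    intro i j hij
    simp only [hq'def, neg_le_neg_iff]
    exact hq j.rev i.rev (Fin.rev_le_rev.mpr hij)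
  have hcard : (S.image Fin.rev).card = k := by
    rw [Finset.card_image_of_injective S Fin.rev_injective]
  have h := sum_le_prefix q' hq' (S.image Fin.rev)
  rw [hcard] at h
  have h1 : ∑ t ∈ S.image Fin.rev, q' t = -∑ t ∈ S, q t := by
    rw [Finset.sum_image (fun a _ b _ hab => Fin.rev_injective hab)]
    simp [hq'def]
  have h2 : ∑ t ∈ Iset T k, q' t = -∑ t ∈ Jset T k, q t := by
    have himg : (Iset T k).image Fin.rev = Jset T k := by
      ext t
      simp only [Iset, Jset, mem_image, mem_filter, mem_univ, true_and]
      constructor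
      · rintro ⟨s, hs, rfl⟩
        have := s.isLt
        simp only [Fin.val_rev]
        omega
      · intro ht
        refine ⟨t.rev, ?_, Fin.rev_rev t⟩
        have := t.isLt
        simp only [Fin.val_rev]
        omega
    rw [show ∑ t ∈ Jset T k, q t = ∑ t ∈ (Iset T k).image Fin.rev, q t by rw [himg],
      Finset.sum_image (fun a _ b _ hab => Fin.rev_injective hab)]
    simp [hq'def]
  rw [h1, h2] at h
  linarith
/-! ## The vertex profile function -/

def gfun (u l : ℕ → ℝ) (T K : ℕ) : ℕ → ℝ := fun j =>
  if j ≤ K then ZExt u j else ZExt u K + ZExt l (T - K) - ZExt l (T - j)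

variable {T : ℕ} {Δt : ℝ} {u l : ℕ → ℝ}

lemma zext_zero (v : ℕ → ℝ) : ZExt v 0 = 0 := rfl

lemma gfun_zero (K : ℕ) : gfun u l T K 0 = 0 := by simp [gfun, zext_zero]

lemma gfun_top {K : ℕ} (hK : K ≤ T) : gfun u l T K T = ZExt u K + ZExt l (T - K) := by
  unfold gfun
  by_cases h : T ≤ K
  · have : K = T := le_antisymm hK h
    subst this
    simp [zext_zero]
  · simp [h, Nat.sub_self, zext_zero]

lemma vertex_diff {K : ℕ} (i : ℕ) (h : i < T) :
    ULvertex T Δt u l K ⟨i, h⟩ = (gfun u l T K (i + 1) - gfun u l T K i) / Δt := by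
  have hval : ((⟨i, h⟩ : Fin T) : ℕ) = i := rfl
  unfold ULvertex gfun
  simp only [hval]
  rcases lt_trichotomy i K with hi | hi | hi
  · rw [if_pos hi, if_pos (by omega : i + 1 ≤ K), if_pos (by omega : i ≤ K)]
  · subst hi
    rw [if_neg (lt_irrefl _), if_neg (by omega : ¬ i + 1 ≤ i), if_pos (le_refl i)]
    rw [show T - (i + 1) = T - i - 1 by omega]
    ring
  · rw [if_neg (by omega : ¬ i < K), if_neg (by omega : ¬ i + 1 ≤ K),
      if_neg (by omega : ¬ i ≤ K)]
    rw [show T - (i + 1) = T - i - 1 by omega]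
    ring

lemma pfx_vertex {K : ℕ} (hΔt : Δt ≠ 0) {j : ℕ} (hj : j ≤ T) :
    Δt * pfx T (ULvertex T Δt u l K) j = gfun u l T K j := by
  have : pfx T (ULvertex T Δt u l K) j
      = ∑ i ∈ range j, (gfun u l T K (i + 1) - gfun u l T K i) / Δt := by
    refine Finset.sum_congr rfl (fun i hi => ?_)
    have hiT : i < T := lt_of_lt_of_le (mem_range.mp hi) hj
    simp only [ext, hiT, dif_pos]
    exact vertex_diff i hiT
  rw [this, ← Finset.sum_div, Finset.sum_range_sub (fun i => gfun u l T K i) j, gfun_zero]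
  field_simp
  ring

/-! ## Consequences of validity -/

lemma key_ineq (h : ValidUL T u l) :
    ∀ a b : ℕ, a ≤ b → b ≤ T →
      ZExt l (T - a) - ZExt l (T - b) ≤ ZExt u b - ZExt u a := by
  intro a b hab hbT
  induction b, hab using Nat.le_induction with
  | base => simp
  | succ b hb ih =>
    have ihb := ih (by omega)
    have h7 := h.2.2.2.2.2.2 (b + 1) (by omega) (by omega)
    rw [show b + 1 - 1 = b by omega] at h7
    rw [show T - (b + 1) + 1 = T - b by omega] at h7
    linarith

lemma gfun_le_u (h : ValidUL T u l) {K : ℕ} (hK : K ≤ T) :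
    ∀ m, m ≤ T → gfun u l T K m ≤ ZExt u m := by
  intro m hm
  unfold gfun
  by_cases h1 : m ≤ K
  · rw [if_pos h1]
  · rw [if_neg h1]
    have := key_ineq h K m (by omega) hm
    linarith

lemma gfun_suffix_ge (h : ValidUL T u l) {K : ℕ} (hK : K ≤ T) :
    ∀ m, m ≤ T → ZExt l m ≤ gfun u l T K T - gfun u l T K (T - m) := by
  intro m hm
  rw [gfun_top hK]
  unfold gfun
  by_cases h1 : T - m ≤ K
  · rw [if_pos h1]
    have := key_ineq h (T - m) K h1 hK
    rw [show T - (T - m) = m by omega] at this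
    linarith
  · rw [if_neg h1]
    rw [show T - (T - m) = m by omega]
    linarith

lemma gfun_suffix_eq {K : ℕ} (hK : K ≤ T) {m : ℕ} (hm : m ≤ T - K) :
    gfun u l T K T - gfun u l T K (T - m) = ZExt l m := by
  rw [gfun_top hK]
  unfold gfun
  by_cases h1 : m = T - K
  · subst h1
    rw [if_pos (by omega : T - (T - K) ≤ K)]
    rw [show T - (T - K) = K by omega]
    ring
  · rw [if_neg (by omega : ¬ T - m ≤ K)]
    rw [show T - (T - m) = m by omega]
    ring

/-! ## The vertex is antitone -/

lemma gdiff_step (h : ValidUL T u l) {K : ℕ} (hK : K ≤ T) {b : ℕ} (hb : b + 2 ≤ T) :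
    gfun u l T K (b + 2) - gfun u l T K (b + 1) ≤ gfun u l T K (b + 1) - gfun u l T K b := by
  obtain ⟨hu_conc, hu_nn, hu_mono, hl_conv, hl_nn, hl_mono, hul⟩ := h
  unfold gfun
  by_cases h1 : b + 2 ≤ K
  · rw [if_pos h1, if_pos (by omega : b + 1 ≤ K), if_pos (by omega : b ≤ K)]
    have := hu_conc (b + 1) (by omega) (by omega)
    rw [show b + 1 - 1 = b by omega, show b + 1 + 1 = b + 2 by omega] at this
    linarith
  · have hc := hl_conv (T - (b + 1)) (by omega) (by omega)
    rw [show T - (b + 1) - 1 = T - (b + 2) by omega,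
      show T - (b + 1) + 1 = T - b by omega] at hc
    by_cases h2 : b + 1 ≤ K
    · -- K = b + 1
      have hKb : K = b + 1 := by omega
      subst hKb
      rw [if_neg h1, if_pos (le_refl _), if_pos (by omega : b ≤ b + 1)]
      have h7 := hul (b + 1) (by omega) (by omega)
      rw [show T - (b + 1) + 1 = T - b by omega, show b + 1 - 1 = b by omega] at h7
      linarith
    · rw [if_neg h1, if_neg h2]
      by_cases h3 : b ≤ K
      · rw [if_pos h3]
        have hbK : b = K := by omega
        subst hbK
        linarith
      · rw [if_neg h3]
        linarith
lemma gdiff_mono (h : ValidUL T u l) {K : ℕ} (hK : K ≤ T) :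
    ∀ a b : ℕ, a ≤ b → b + 1 ≤ T →
      gfun u l T K (b + 1) - gfun u l T K b ≤ gfun u l T K (a + 1) - gfun u l T K a := by
  intro a b hab hbT
  induction b, hab using Nat.le_induction with
  | base => exact le_refl _
  | succ b hb ih =>
    have h1 := ih (by omega)
    have h2 := gdiff_step h hK (show b + 2 ≤ T by omega)
    linarith

lemma vertex_antitone (h : ValidUL T u l) {K : ℕ} (hK : K ≤ T) (hΔt : 0 < Δt) :
    ∀ i j : Fin T, i ≤ j → ULvertex T Δt u l K j ≤ ULvertex T Δt u l K i := by
  intro i j hij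
  have hi : ULvertex T Δt u l K i = (gfun u l T K ((i : ℕ) + 1) - gfun u l T K (i : ℕ)) / Δt := by
    rw [← vertex_diff (i : ℕ) i.isLt]
  have hj : ULvertex T Δt u l K j = (gfun u l T K ((j : ℕ) + 1) - gfun u l T K (j : ℕ)) / Δt := by
    rw [← vertex_diff (j : ℕ) j.isLt]
  rw [hi, hj]
  have hstep := gdiff_mono h hK (i : ℕ) (j : ℕ) hij (by omega)
  gcongr

lemma mem_ULset_of (hΔt : 0 < Δt) (q : Fin T → ℝ)
    (hanti : ∀ i j : Fin T, i ≤ j → q j ≤ q i)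
    (hup : ∀ j, 1 ≤ j → j ≤ T → Δt * pfx T q j ≤ u j)
    (hlo : ∀ m, 1 ≤ m → m ≤ T → l m ≤ Δt * (pfx T q T - pfx T q (T - m))) :
    q ∈ ULset T Δt u l := by
  intro S hS
  have hk1 : 1 ≤ S.card := Finset.card_pos.mpr hS
  have hkT : S.card ≤ T := by simpa using Finset.card_le_card (Finset.subset_univ S)
  constructor
  · calc l S.card ≤ Δt * (pfx T q T - pfx T q (T - S.card)) := hlo _ hk1 hkT
      _ = Δt * ∑ t ∈ Jset T S.card, q t := by rw [sum_Jset]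
      _ ≤ Δt * ∑ t ∈ S, q t := by
          exact mul_le_mul_of_nonneg_left (suffix_le_sum q hanti S) (le_of_lt hΔt)
  · calc Δt * ∑ t ∈ S, q t ≤ Δt * ∑ t ∈ Iset T S.card, q t := by
          exact mul_le_mul_of_nonneg_left (sum_le_prefix q hanti S) (le_of_lt hΔt)
      _ = Δt * pfx T q S.card := by rw [pfx_eq_sum T q hkT]
      _ ≤ u S.card := hup _ hk1 hkT

lemma zext_pos {v : ℕ → ℝ} {j : ℕ} (hj : 1 ≤ j) : ZExt v j = v j := by
  simp [ZExt]; omega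

lemma vertex_mem (h : ValidUL T u l) {K : ℕ} (hK : K ≤ T) (hΔt : 0 < Δt) :
    ULvertex T Δt u l K ∈ ULset T Δt u l := by
  apply mem_ULset_of hΔt _ (vertex_antitone h hK hΔt)
  · intro j hj1 hjT
    rw [pfx_vertex (ne_of_gt hΔt) hjT, ← zext_pos (v := u) hj1]
    exact gfun_le_u h hK j hjT
  · intro m hm1 hmT
    rw [mul_sub, pfx_vertex (ne_of_gt hΔt) (le_refl T),
      pfx_vertex (ne_of_gt hΔt) (Nat.sub_le T m), ← zext_pos (v := l) hm1]
    exact gfun_suffix_ge h hK m hmT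

lemma ULset_pfx_le {q : Fin T → ℝ} (hq : q ∈ ULset T Δt u l) {j : ℕ} (hj1 : 1 ≤ j)
    (hjT : j ≤ T) : Δt * pfx T q j ≤ u j := by
  have hne : (Iset T j).Nonempty := by
    rw [← Finset.card_pos, card_Iset T hjT]; omega
  have := (hq (Iset T j) hne).2
  rw [card_Iset T hjT] at this
  rw [pfx_eq_sum T q hjT]
  exact this

lemma ULset_le_sfx {q : Fin T → ℝ} (hq : q ∈ ULset T Δt u l) {m : ℕ} (hm1 : 1 ≤ m)
    (hmT : m ≤ T) : l m ≤ Δt * (pfx T q T - pfx T q (T - m)) := by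
  have hne : (Jset T m).Nonempty := by
    rw [← Finset.card_pos, card_Jset T hmT]; omega
  have := (hq (Jset T m) hne).1
  rw [card_Jset T hmT] at this
  rw [← sum_Jset]
  exact this
def psum (X : ℕ → ℝ) (n : ℕ) : ℝ := ∑ i ∈ range n, X i

lemma psum_succ (X : ℕ → ℝ) (n : ℕ) : psum X (n + 1) = psum X n + X n := by
  simp [psum, Finset.sum_range_succ]

lemma idH (C X : ℕ → ℝ) :
    ∀ K : ℕ, 1 ≤ K →
    ∑ i ∈ range K, C i * X i
      = C (K - 1) * psum X K
        + ∑ j ∈ range (K - 1), (C j - C (j + 1)) * psum X (j + 1) := by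
  intro K hK
  induction K, hK using Nat.le_induction with
  | base => simp [psum, Finset.sum_range_one]
  | succ K hK ih =>
    rw [Finset.sum_range_succ, ih]
    rw [show K + 1 - 1 = K by omega]
    rw [show K = (K - 1) + 1 by omega]
    rw [Finset.sum_range_succ]
    rw [show K - 1 + 1 = K by omega]
    rw [psum_succ]
    ring

lemma idT (C X : ℕ → ℝ) (N : ℕ) :
    ∀ (m K : ℕ), N - K ≤ m → K ≤ N →
    ∑ i ∈ Ico K N, C i * X i
      = C K * (psum X N - psum X K)
        - ∑ j ∈ Ico K (N - 1), (C j - C (j + 1)) * (psum X N - psum X (j + 1)) := by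
  intro m
  induction m with
  | zero =>
    intro K hm hK
    have : K = N := by omega
    subst this
    simp
  | succ m ih =>
    intro K hm hK
    by_cases hKN : K = N
    · subst hKN; simp
    · have hKN' : K < N := by omega
      have hbot : ∑ i ∈ Ico K N, C i * X i
          = C K * X K + ∑ i ∈ Ico (K + 1) N, C i * X i := by
        rw [Finset.sum_eq_sum_Ico_succ_bot hKN']
      have ihK := ih (K + 1) (by omega) (by omega)
      by_cases hK1 : K + 1 = N
      · rw [hbot, ihK]
        rw [← hK1]
        rw [show K + 1 - 1 = K by omega]
        simp [psum_succ]
      · have hK2 : K < N - 1 := by omega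
        have hbot2 : ∑ j ∈ Ico K (N - 1), (C j - C (j + 1)) * (psum X N - psum X (j + 1))
            = (C K - C (K + 1)) * (psum X N - psum X (K + 1))
              + ∑ j ∈ Ico (K + 1) (N - 1), (C j - C (j + 1)) * (psum X N - psum X (j + 1)) := by
          rw [Finset.sum_eq_sum_Ico_succ_bot hK2]
        rw [hbot, ihK, hbot2]
        have : ∑ j ∈ Ico (K + 1) (N - 1), (C j - C (j + 1)) * (psum X N - psum X (j + 1))
            = C (K + 1) * (psum X N - psum X (K + 1))
              - ∑ i ∈ Ico (K + 1) N, C i * X i := by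
          rw [ihK]; ring
        rw [this, ihK, psum_succ]
        ring

lemma psum_ext_eq_pfx (x : Fin T → ℝ) (j : ℕ) : psum (ext T x) j = pfx T x j := rfl

/-- a downward closed set of indices is a prefix set -/
lemma downward_closed_eq_Iset (A : Finset (Fin T))
    (hdc : ∀ s t : Fin T, s ≤ t → t ∈ A → s ∈ A) : A = Iset T A.card := by
  ext t
  constructor
  · intro ht
    have hsub : Iset T ((t : ℕ) + 1) ⊆ A := by
      intro s hs
      simp only [Iset, mem_filter, mem_univ, true_and] at hs
      exact hdc s t (Fin.le_def.mpr (by omega)) ht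
    have := Finset.card_le_card hsub
    rw [card_Iset T (by omega : (t : ℕ) + 1 ≤ T)] at this
    simp only [Iset, mem_filter, mem_univ, true_and]
    omega
  · intro ht
    simp only [Iset, mem_filter, mem_univ, true_and] at ht
    by_contra hta
    have hsub : A ⊆ Iset T (t : ℕ) := by
      intro s hs
      simp only [Iset, mem_filter, mem_univ, true_and]
      by_contra hst
      exact hta (hdc t s (Fin.le_def.mpr (by omega)) hs)
    have := Finset.card_le_card hsub
    rw [card_Iset T (le_of_lt t.isLt)] at this
    omega

/-- The greedy bound: any antitone cost is maximized over `ULset` at a vertex. -/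
lemma greedy (hΔt : 0 < Δt) (q : Fin T → ℝ)
    (hq : q ∈ ULset T Δt u l) (c : Fin T → ℝ)
    (hc : ∀ i j : Fin T, i ≤ j → c j ≤ c i) :
    ∃ K, K ≤ T ∧ ∑ t, c t * q t ≤ ∑ t, c t * ULvertex T Δt u l K t := by
  classical
  set A : Finset (Fin T) := univ.filter (fun t => 0 < c t) with hA
  set K := A.card with hKdef
  have hKT : K ≤ T := by simpa [hKdef] using Finset.card_le_card (Finset.subset_univ A)
  have hAI : A = Iset T K := by
    refine downward_closed_eq_Iset A (fun s t hst ht => ?_)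
    simp only [hA, mem_filter, mem_univ, true_and] at ht ⊢
    exact lt_of_lt_of_le ht (hc s t hst)
  refine ⟨K, hKT, ?_⟩
  set v : Fin T → ℝ := ULvertex T Δt u l K with hv
  set C : ℕ → ℝ := ext T c with hC
  set X : ℕ → ℝ := ext T q with hX
  set Y : ℕ → ℝ := ext T v with hY
  -- sign facts
  have hpos : ∀ i : ℕ, i < K → 0 < C i := by
    intro i hi
    have hiT : i < T := lt_of_lt_of_le hi hKT
    have : (⟨i, hiT⟩ : Fin T) ∈ Iset T K := by
      simp only [Iset, mem_filter, mem_univ, true_and]; exact hi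
    rw [← hAI] at this
    simp only [hA, mem_filter, mem_univ, true_and] at this
    simpa [hC, ext, hiT] using this
  have hneg : ∀ i : ℕ, K ≤ i → i < T → C i ≤ 0 := by
    intro i hKi hiT
    have : (⟨i, hiT⟩ : Fin T) ∉ Iset T K := by
      simp only [Iset, mem_filter, mem_univ, true_and]; omega
    rw [← hAI] at this
    simp only [hA, mem_filter, mem_univ, true_and, not_lt] at this
    simpa [hC, ext, hiT] using this
  have hCanti : ∀ i j : ℕ, i ≤ j → j < T → C j ≤ C i := by
    intro i j hij hjT
    have hiT : i < T := lt_of_le_of_lt hij hjT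
    have := hc ⟨i, hiT⟩ ⟨j, hjT⟩ (Fin.mk_le_mk.mpr (by omega))
    simpa [hC, ext, hiT, hjT] using this
  -- prefix comparisons
  have hpfx : ∀ j : ℕ, 1 ≤ j → j ≤ K → pfx T q j ≤ pfx T v j := by
    intro j h1 h2
    have hjT : j ≤ T := le_trans h2 hKT
    have hu1 : Δt * pfx T q j ≤ u j := ULset_pfx_le hq h1 hjT
    have hu2 : Δt * pfx T v j = u j := by
      rw [hv, pfx_vertex (ne_of_gt hΔt) hjT]
      unfold gfun
      rw [if_pos h2, zext_pos h1]
    have : Δt * pfx T q j ≤ Δt * pfx T v j := by rw [hu2]; exact hu1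
    exact le_of_mul_le_mul_left this hΔt
  have hsfx : ∀ j : ℕ, K ≤ j → j < T →
      pfx T v T - pfx T v j ≤ pfx T q T - pfx T q j := by
    intro j hKj hjT
    set m := T - j with hm
    have hm1 : 1 ≤ m := by omega
    have hmT : m ≤ T := by omega
    have hl1 : l m ≤ Δt * (pfx T q T - pfx T q (T - m)) := ULset_le_sfx hq hm1 hmT
    have hl2 : Δt * (pfx T v T - pfx T v (T - m)) = l m := by
      rw [hv, mul_sub, pfx_vertex (ne_of_gt hΔt) (le_refl T),
        pfx_vertex (ne_of_gt hΔt) (Nat.sub_le T m)]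
      rw [gfun_suffix_eq hKT (by omega : m ≤ T - K), zext_pos hm1]
    have hTm : T - m = j := by omega
    rw [hTm] at hl1 hl2
    have : Δt * (pfx T v T - pfx T v j) ≤ Δt * (pfx T q T - pfx T q j) := by
      rw [hl2]; exact hl1
    exact le_of_mul_le_mul_left this hΔt
  -- express the sums over ranges
  have hsplit : ∀ x : Fin T → ℝ,
      ∑ t, c t * x t = ∑ i ∈ range K, C i * ext T x i + ∑ i ∈ Ico K T, C i * ext T x i := by
    intro x
    rw [Finset.range_eq_Ico, Finset.sum_Ico_consecutive _ (Nat.zero_le K) hKT,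
      ← Finset.range_eq_Ico, ← Fin.sum_univ_eq_sum_range (fun i => C i * ext T x i) T]
    exact Finset.sum_congr rfl (fun t _ => by rw [hC, ext_val, ext_val])
  rw [hsplit q, hsplit v]
  -- head inequality
  have hhead : ∑ i ∈ range K, C i * X i ≤ ∑ i ∈ range K, C i * Y i := by
    by_cases hK0 : K = 0
    · simp [hK0]
    · have hK1 : 1 ≤ K := by omega
      rw [idH C X K hK1, idH C Y K hK1]
      have t1 : C (K - 1) * psum X K ≤ C (K - 1) * psum Y K := by
        refine mul_le_mul_of_nonneg_left ?_ (le_of_lt (hpos (K - 1) (by omega)))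
        rw [psum_ext_eq_pfx, psum_ext_eq_pfx]
        exact hpfx K hK1 (le_refl K)
      have t2 : ∑ j ∈ range (K - 1), (C j - C (j + 1)) * psum X (j + 1)
          ≤ ∑ j ∈ range (K - 1), (C j - C (j + 1)) * psum Y (j + 1) := by
        refine Finset.sum_le_sum (fun j hj => ?_)
        have hjK : j < K - 1 := mem_range.mp hj
        refine mul_le_mul_of_nonneg_left ?_ ?_
        · rw [psum_ext_eq_pfx, psum_ext_eq_pfx]
          exact hpfx (j + 1) (by omega) (by omega)
        · have := hCanti j (j + 1) (by omega) (by omega)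
          linarith
      linarith
  -- tail inequality
  have htail : ∑ i ∈ Ico K T, C i * X i ≤ ∑ i ∈ Ico K T, C i * Y i := by
    by_cases hKT' : K = T
    · simp [hKT']
    · have hKlt : K < T := by omega
      rw [idT C X T T K (by omega) hKT, idT C Y T T K (by omega) hKT]
      have t1 : C K * (psum X T - psum X K) ≤ C K * (psum Y T - psum Y K) := by
        rw [psum_ext_eq_pfx, psum_ext_eq_pfx, psum_ext_eq_pfx, psum_ext_eq_pfx]
        exact mul_le_mul_of_nonpos_left (hsfx K (le_refl K) hKlt) (hneg K (le_refl K) hKlt)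
      have t2 : ∑ j ∈ Ico K (T - 1), (C j - C (j + 1)) * (psum X T - psum X (j + 1))
          ≥ ∑ j ∈ Ico K (T - 1), (C j - C (j + 1)) * (psum Y T - psum Y (j + 1)) := by
        refine Finset.sum_le_sum (fun j hj => ?_)
        rw [Finset.mem_Ico] at hj
        refine mul_le_mul_of_nonneg_left ?_ ?_
        · rw [psum_ext_eq_pfx, psum_ext_eq_pfx, psum_ext_eq_pfx, psum_ext_eq_pfx]
          exact hsfx (j + 1) (by omega) (by omega)
        · have := hCanti j (j + 1) (by omega) (by omega)
          linarith
      linarith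
  linarith [hhead, htail]
/-! ## Permutation invariance and convexity -/

lemma ULset_perm (σ : Equiv.Perm (Fin T)) {q : Fin T → ℝ} (hq : q ∈ ULset T Δt u l) :
    (fun t => q (σ t)) ∈ ULset T Δt u l := by
  intro S hS
  have himg : ∑ t ∈ S, q (σ t) = ∑ t ∈ S.image σ, q t := by
    rw [Finset.sum_image (fun a _ b _ hab => σ.injective hab)]
  have hcard : (S.image σ).card = S.card :=
    Finset.card_image_of_injective S σ.injective
  have := hq (S.image σ) (hS.image σ)
  rw [hcard] at this
  rw [himg]
  exact this

lemma ULset_convex : Convex ℝ (ULset T Δt u l) := by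
  intro x hx y hy a b ha hb hab
  intro S hS
  obtain ⟨h1, h2⟩ := hx S hS
  obtain ⟨h3, h4⟩ := hy S hS
  have hsum : ∑ t ∈ S, (a • x + b • y) t = a * ∑ t ∈ S, x t + b * ∑ t ∈ S, y t := by
    simp [Finset.sum_add_distrib, Finset.mul_sum, smul_eq_mul]
  have heq : Δt * (a * ∑ t ∈ S, x t + b * ∑ t ∈ S, y t)
      = a * (Δt * ∑ t ∈ S, x t) + b * (Δt * ∑ t ∈ S, y t) := by ring
  have hl : a * l S.card + b * l S.card = l S.card := by rw [← add_mul, hab, one_mul]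
  have hu : a * u S.card + b * u S.card = u S.card := by rw [← add_mul, hab, one_mul]
  constructor
  · rw [hsum, heq]
    have t1 := mul_le_mul_of_nonneg_left h1 ha
    have t2 := mul_le_mul_of_nonneg_left h3 hb
    linarith
  · rw [hsum, heq]
    have t1 := mul_le_mul_of_nonneg_left h2 ha
    have t2 := mul_le_mul_of_nonneg_left h4 hb
    linarith

lemma zext_add (u₁ u₂ : ℕ → ℝ) (j : ℕ) :
    ZExt (fun k => u₁ k + u₂ k) j = ZExt u₁ j + ZExt u₂ j := by
  unfold ZExt
  split <;> simp

lemma vertex_add (u₁ l₁ u₂ l₂ : ℕ → ℝ) (K : ℕ) (t : Fin T) :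
    ULvertex T Δt (fun k => u₁ k + u₂ k) (fun k => l₁ k + l₂ k) K t
      = ULvertex T Δt u₁ l₁ K t + ULvertex T Δt u₂ l₂ K t := by
  unfold ULvertex
  split <;> rw [zext_add, zext_add] <;> ring

/-- linear functional as a sum against coordinates -/
lemma clm_eq_sum (f : (Fin T → ℝ) →L[ℝ] ℝ) (x : Fin T → ℝ) :
    f x = ∑ t, f (Pi.single t (1:ℝ) : Fin T → ℝ) * x t := by
  have hx : x = ∑ t, x t • (Pi.single t (1:ℝ) : Fin T → ℝ) := by
    funext s
    simp [Finset.sum_apply, Pi.single_apply]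
  conv_lhs => rw [hx]
  rw [map_sum]
  refine Finset.sum_congr rfl (fun t _ => ?_)
  rw [map_smul, smul_eq_mul, mul_comm]

end ULaux
open ULaux


/-- For valid UL-parameter pairs, the Minkowski sum of the
UL-flexibility sets equals the UL-flexibility set of the summed parameters. -/
theorem ULset_minkowski_sum (T : ℕ) (hT : 1 ≤ T) (Δt : ℝ) (hΔt : 0 < Δt)
    (u₁ l₁ u₂ l₂ : ℕ → ℝ)
    (h₁ : ValidUL T u₁ l₁) (h₂ : ValidUL T u₂ l₂) :
    {p : Fin T → ℝ | ∃ p₁ ∈ ULset T Δt u₁ l₁, ∃ p₂ ∈ ULset T Δt u₂ l₂, p = p₁ + p₂}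
      = ULset T Δt (fun k => u₁ k + u₂ k) (fun k => l₁ k + l₂ k) := by
  classical
  set U : ℕ → ℝ := fun k => u₁ k + u₂ k with hU
  set Lw : ℕ → ℝ := fun k => l₁ k + l₂ k with hLw
  ext p
  simp only [Set.mem_setOf_eq]
  constructor
  · rintro ⟨p₁, hp₁, p₂, hp₂, rfl⟩
    intro S hS
    obtain ⟨ha1, ha2⟩ := hp₁ S hS
    obtain ⟨hb1, hb2⟩ := hp₂ S hS
    have hsum : ∑ t ∈ S, (p₁ + p₂) t = ∑ t ∈ S, p₁ t + ∑ t ∈ S, p₂ t := by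
      simp [Finset.sum_add_distrib]
    have heq : Δt * (∑ t ∈ S, p₁ t + ∑ t ∈ S, p₂ t)
        = Δt * ∑ t ∈ S, p₁ t + Δt * ∑ t ∈ S, p₂ t := by ring
    constructor
    · rw [hsum, heq]; exact add_le_add ha1 hb1
    · rw [hsum, heq]; exact add_le_add ha2 hb2
  · intro hp
    -- the vertex family
    set W : (Equiv.Perm (Fin T) × Fin (T + 1)) → (ℕ → ℝ) → (ℕ → ℝ) → (Fin T → ℝ) :=
      fun i u l => fun t => ULvertex T Δt u l (i.2 : ℕ) (i.1 t) with hW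
    have hWmem : ∀ (u l : ℕ → ℝ), ValidUL T u l →
        ∀ i, W i u l ∈ ULset T Δt u l := by
      intro u l hv i
      exact ULset_perm i.1 (vertex_mem hv (Nat.lt_succ_iff.mp i.2.isLt) hΔt)
    -- Step 1: p is in the convex hull of the W's for the summed parameters
    have hhull : p ∈ convexHull ℝ (Set.range (fun i => W i U Lw)) := by
      by_contra hnot
      have hfin : (Set.range (fun i => W i U Lw)).Finite := Set.finite_range _
      obtain ⟨f, u', hfu, hup⟩ :=
        geometric_hahn_banach_closed_point
          (convex_convexHull ℝ _) ((hfin.isCompact_convexHull (𝕜 := ℝ)).isClosed) hnot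
      set c : Fin T → ℝ := fun t => f (Pi.single t (1:ℝ) : Fin T → ℝ) with hc
      set τ : Equiv.Perm (Fin T) := Fin.revPerm.trans (Tuple.sort c) with hτ
      have hanti : ∀ i j : Fin T, i ≤ j → c (τ j) ≤ c (τ i) := by
        intro i j hij
        exact Tuple.monotone_sort c (Fin.rev_le_rev.mpr hij)
      have hq' : (fun t => p (τ t)) ∈ ULset T Δt U Lw := ULset_perm τ hp
      obtain ⟨K, hKT, hineq⟩ := greedy hΔt _ hq' (fun t => c (τ t)) hanti
      set v : Fin T → ℝ := ULvertex T Δt U Lw K with hv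
      have hA : ∑ t, c (τ t) * p (τ t) = ∑ t, c t * p t :=
        Equiv.sum_comp τ (fun s => c s * p s)
      have hB : ∑ t, c (τ t) * v t = ∑ s, c s * v (τ.symm s) := by
        rw [← Equiv.sum_comp τ (fun s => c s * v (τ.symm s))]
        simp
      set y : Fin T → ℝ := fun t => v (τ.symm t) with hy
      have hymem : y ∈ Set.range (fun i => W i U Lw) := by
        refine ⟨(τ.symm, ⟨K, by omega⟩), ?_⟩
        funext t
        simp [hW, hy, hv]
      have hfy : f y < u' := hfu y (subset_convexHull ℝ _ hymem)
      have hfyval : f y = ∑ t, c t * v (τ.symm t) := by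
        rw [clm_eq_sum f y]
      have hfpval : f p = ∑ t, c t * p t := by
        rw [clm_eq_sum f p]
      rw [hfyval] at hfy
      rw [hfpval] at hup
      rw [hA, hB] at hineq
      linarith
    -- Step 2: decompose using the convex-combination representation
    rw [Set.Finite.convexHull_eq (Set.finite_range _)] at hhull
    obtain ⟨w, hw0, hw1, hwc⟩ := hhull
    set F := (Set.finite_range (fun i => W i U Lw)).toFinset with hF
    have hrep : p = ∑ y ∈ F, w y • y := by
      rw [← hwc, Finset.centerMass_eq_of_sum_1 _ id hw1]
      simp
    set g : (Fin T → ℝ) → (Equiv.Perm (Fin T) × Fin (T + 1)) :=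
      fun y => if h : ∃ i, W i U Lw = y then h.choose else (1, 0) with hg
    have hgspec : ∀ y ∈ F, W (g y) U Lw = y := by
      intro y hy
      rw [hF, Set.Finite.mem_toFinset] at hy
      obtain ⟨i, hi⟩ := hy
      have h : ∃ i, W i U Lw = y := ⟨i, hi⟩
      simp only [hg, dif_pos h]
      exact h.choose_spec
    refine ⟨∑ y ∈ F, w y • W (g y) u₁ l₁, ?_, ∑ y ∈ F, w y • W (g y) u₂ l₂, ?_, ?_⟩
    · refine Convex.sum_mem ULset_convex (fun y hy => ?_) hw1 (fun y hy => ?_)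
      · rw [hF, Set.Finite.mem_toFinset] at hy
        exact hw0 y hy
      · exact hWmem u₁ l₁ h₁ (g y)
    · refine Convex.sum_mem ULset_convex (fun y hy => ?_) hw1 (fun y hy => ?_)
      · rw [hF, Set.Finite.mem_toFinset] at hy
        exact hw0 y hy
      · exact hWmem u₂ l₂ h₂ (g y)
    · rw [hrep, ← Finset.sum_add_distrib]
      refine Finset.sum_congr rfl (fun y hy => ?_)
      have hWadd : W (g y) U Lw = W (g y) u₁ l₁ + W (g y) u₂ l₂ := by
        funext t
        show ULvertex T Δt U Lw ((g y).2 : ℕ) ((g y).1 t)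
            = ULvertex T Δt u₁ l₁ ((g y).2 : ℕ) ((g y).1 t)
              + ULvertex T Δt u₂ l₂ ((g y).2 : ℕ) ((g y).1 t)
        exact vertex_add u₁ l₁ u₂ l₂ ((g y).2 : ℕ) ((g y).1 t)
      have hyy : w y • y = w y • (W (g y) u₁ l₁ + W (g y) u₂ l₂) := by
        rw [← hWadd, hgspec y hy]
      rw [hyy, smul_add]
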